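/- Let W and W̃ be real C×D matrices, b ∈ ℝ^C, and h ∈ ℝ^D with Euclidean norm ‖h‖₂ ≤ R. Define p = σ(W·h + b) and p̃ = σ(W̃·h + b), where σ is the softmax function. Then for every class index c ∈ {1,…,C}, |p̃_c − p_c| ≤ (1/2)·R·‖W − W̃‖₂, where ‖·‖₂ on matrices denotes the spectral norm. -/

import Mathlib

/-- The softmax function on `ℝ^C`: `σ_i(u) = exp(u_i) / ∑_ℓ exp(u_ℓ)`. -/
noncomputable def softmax {C : ℕ} (u : Fin C → ℝ) : Fin C → ℝ :=
  fun i => Real.exp (u i) / ∑ ℓ, Real.exp (u ℓ)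

/-- The spectral norm of a real `C × D` matrix: the operator norm of the induced
linear map from `ℝ^D` with the Euclidean norm to `ℝ^C` with the Euclidean norm. -/
noncomputable def matSpectralNorm {C D : ℕ} (A : Matrix (Fin C) (Fin D) ℝ) : ℝ :=
  ‖LinearMap.toContinuousLinearMap (Matrix.toEuclideanLin A)‖

/-- Per-coordinate Lipschitz bound for softmax: if each coordinate of the
perturbation `d` is bounded by `M`, then `|σ_c(u+d) - σ_c(u)| ≤ M/2`. -/
lemma softmax_coord_lipschitz {C : ℕ} (u d : Fin C → ℝ) (c : Fin C) (M : ℝ)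
    (hM : ∀ i, |d i| ≤ M) :
    |softmax (u + d) c - softmax u c| ≤ (1 / 2) * M := by
  have hM0 : 0 ≤ M := le_trans (abs_nonneg _) (hM c)
  set S : ℝ → ℝ := fun t => ∑ ℓ, Real.exp (u ℓ + t * d ℓ) with hS
  have hSpos : ∀ t, 0 < S t := fun t =>
    Finset.sum_pos (fun i _ => Real.exp_pos _) ⟨c, Finset.mem_univ c⟩
  set g : ℝ → ℝ := fun t => Real.exp (u c + t * d c) / S t with hg
  set g' : ℝ → ℝ := fun t =>
    (Real.exp (u c + t * d c) * d c * S t -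
      Real.exp (u c + t * d c) * ∑ ℓ, Real.exp (u ℓ + t * d ℓ) * d ℓ) / (S t) ^ 2 with hg'
  have hE : ∀ (i : Fin C) (t : ℝ), HasDerivAt (fun t => Real.exp (u i + t * d i))
      (Real.exp (u i + t * d i) * d i) t := fun i t =>
    ((hasDerivAt_mul_const (d i)).const_add (u i)).exp
  have hSd : ∀ t, HasDerivAt S (∑ ℓ, Real.exp (u ℓ + t * d ℓ) * d ℓ) t := fun t =>
    HasDerivAt.fun_sum (fun i _ => hE i t)
  have hgd : ∀ t, HasDerivAt g (g' t) t := fun t =>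
    (hE c t).div (hSd t) (ne_of_gt (hSpos t))
  have hbound : ∀ t, ‖g' t‖ ≤ (1 / 2) * M := by
    intro t
    set E : Fin C → ℝ := fun i => Real.exp (u i + t * d i) with hEdef
    have hEpos : ∀ i, 0 < E i := fun i => Real.exp_pos _
    have hSt : S t = ∑ ℓ, E ℓ := rfl
    have hnum : E c * d c * S t - E c * ∑ ℓ, E ℓ * d ℓ
        = E c * ∑ ℓ, E ℓ * (d c - d ℓ) := by
      rw [hSt, Finset.mul_sum, Finset.mul_sum, Finset.mul_sum, ← Finset.sum_sub_distrib]
      congr 1; ext ℓ; ring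
    have hEleS : E c ≤ S t := by
      rw [hSt]
      exact Finset.single_le_sum (fun i _ => (hEpos i).le) (Finset.mem_univ c)
    have habs : |∑ ℓ, E ℓ * (d c - d ℓ)| ≤ 2 * M * (S t - E c) := by
      calc |∑ ℓ, E ℓ * (d c - d ℓ)| ≤ ∑ ℓ, |E ℓ * (d c - d ℓ)| :=
            Finset.abs_sum_le_sum_abs _ _
        _ = ∑ ℓ ∈ Finset.univ.erase c, |E ℓ * (d c - d ℓ)| := by
            rw [Finset.sum_erase]
            simp
        _ ≤ ∑ ℓ ∈ Finset.univ.erase c, E ℓ * (2 * M) := by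
            refine Finset.sum_le_sum fun i _ => ?_
            rw [abs_mul, abs_of_pos (hEpos i)]
            refine mul_le_mul_of_nonneg_left ?_ (hEpos i).le
            calc |d c - d i| ≤ |d c| + |d i| := abs_sub _ _
              _ ≤ M + M := add_le_add (hM c) (hM i)
              _ = 2 * M := by ring
        _ = 2 * M * (S t - E c) := by
            rw [← Finset.sum_mul, Finset.sum_erase_eq_sub (Finset.mem_univ c), hSt]
            ring
    have hnum2 : |E c * d c * S t - E c * ∑ ℓ, E ℓ * d ℓ| ≤ (1 / 2) * M * (S t) ^ 2 := by
      rw [hnum, abs_mul, abs_of_pos (hEpos c)]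
      calc E c * |∑ ℓ, E ℓ * (d c - d ℓ)| ≤ E c * (2 * M * (S t - E c)) :=
            mul_le_mul_of_nonneg_left habs (hEpos c).le
        _ ≤ (1 / 2) * M * (S t) ^ 2 := by
            nlinarith [sq_nonneg (S t - 2 * E c), (hEpos c).le, hEleS, hSpos t, hM0]
    have : g' t = (E c * d c * S t - E c * ∑ ℓ, E ℓ * d ℓ) / (S t) ^ 2 := rfl
    rw [Real.norm_eq_abs, this, abs_div, abs_of_pos (pow_pos (hSpos t) 2)]
    rw [div_le_iff₀ (pow_pos (hSpos t) 2)]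
    exact hnum2
  have key : ‖g 1 - g 0‖ ≤ (1 / 2) * M * ‖(1 : ℝ) - 0‖ := by
    refine convex_univ.norm_image_sub_le_of_norm_hasDerivWithin_le
      (fun x _ => (hgd x).hasDerivWithinAt) (fun x _ => hbound x) trivial trivial
  have hg1 : g 1 = softmax (u + d) c := by
    simp only [hg, hS, softmax, one_mul, Pi.add_apply]
  have hg0 : g 0 = softmax u c := by
    simp only [hg, hS, softmax, zero_mul, add_zero]
  rw [hg1, hg0] at key
  simpa using key

/-- For every class index `c`, the perturbation of the predicted probability satisfies
`|p̃_c - p_c| ≤ (1/2)·R·‖W - W̃‖₂`, where `p = σ(W·h + b)` and `p̃ = σ(W̃·h + b)`. -/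
theorem softmax_perturbation_coord {C D : ℕ} (hC : 0 < C) (hD : 0 < D)
    (W Wt : Matrix (Fin C) (Fin D) ℝ) (b : Fin C → ℝ) (R : ℝ)
    (h : EuclideanSpace ℝ (Fin D)) (hh : ‖h‖ ≤ R) (c : Fin C) :
    |softmax (Wt.mulVec (WithLp.equiv 2 (Fin D → ℝ) h) + b) c -
        softmax (W.mulVec (WithLp.equiv 2 (Fin D → ℝ) h) + b) c| ≤
      (1 / 2) * R * matSpectralNorm (W - Wt) := by
  set h' : Fin D → ℝ := WithLp.equiv 2 (Fin D → ℝ) h with hh'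
  set u : Fin C → ℝ := W.mulVec h' + b with hu
  set d : Fin C → ℝ := Wt.mulVec h' - W.mulVec h' with hd
  set L := LinearMap.toContinuousLinearMap (Matrix.toEuclideanLin (W - Wt)) with hL
  have hLh : ∀ i, (L h : EuclideanSpace ℝ (Fin C)) i = ((W - Wt).mulVec h') i := fun i => rfl
  have hnormLh : ‖(L h : EuclideanSpace ℝ (Fin C))‖ ≤ matSpectralNorm (W - Wt) * R := by
    calc ‖(L h : EuclideanSpace ℝ (Fin C))‖ ≤ ‖L‖ * ‖h‖ := L.le_opNorm h
      _ ≤ matSpectralNorm (W - Wt) * R :=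
          mul_le_mul_of_nonneg_left hh (norm_nonneg L)
  have hcoord : ∀ i, |d i| ≤ matSpectralNorm (W - Wt) * R := by
    intro i
    have h1 : d i = -(((W - Wt).mulVec h') i) := by
      simp [hd, Matrix.sub_mulVec, Pi.sub_apply]
    have h2 : |((W - Wt).mulVec h') i| ≤ ‖(L h : EuclideanSpace ℝ (Fin C))‖ := by
      rw [← hLh i, EuclideanSpace.norm_eq]
      have : |(L h : EuclideanSpace ℝ (Fin C)) i| =
          Real.sqrt (‖(L h : EuclideanSpace ℝ (Fin C)) i‖ ^ 2) := by
        rw [Real.norm_eq_abs, Real.sqrt_sq_eq_abs, abs_abs]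
      rw [this]
      refine Real.sqrt_le_sqrt ?_
      exact Finset.single_le_sum (f := fun j => ‖(L h : EuclideanSpace ℝ (Fin C)) j‖ ^ 2)
        (fun j _ => sq_nonneg _) (Finset.mem_univ i)
    rw [h1, abs_neg]
    exact h2.trans hnormLh
  have heq : Wt.mulVec h' + b = u + d := by
    funext i; simp [hu, hd]; ring
  rw [heq]
  calc |softmax (u + d) c - softmax u c| ≤ (1 / 2) * (matSpectralNorm (W - Wt) * R) :=
        softmax_coord_lipschitz u d c (matSpectralNorm (W - Wt) * R) hcoord
    _ = (1 / 2) * R * matSpectralNorm (W - Wt) := by ring
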